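/- arXiv:1910.12950 — 2 statements merged into one kernel-verified Lean document; each statement's English description precedes it below -/
import Mathlib

section
/- Let ∂_x, ∂_ξ, ∂_θ, ∂_z be the ℂ-linear endomorphisms of A_q defined on the PBW basis by ∂_x(x^m ξ^α θ^β z^n) = m x^{m−1} ξ^α θ^β z^n, ∂_ξ(x^m ξ^α θ^β z^n) = α q^m x^m θ^β z^n, ∂_θ(x^m ξ^α θ^β z^n) = β q^m x^m ξ^α z^n, ∂_z(x^m ξ^α θ^β z^n) = n (−q⁻¹)^{α+β} x^m ξ^α θ^β z^{n−1}. Then, as operators on A_q (with a generator u acting by left multiplication L_u), the following sixteen relations hold: ∂_x L_x = Id + L_x ∂_x; ∂_ξ L_x = q L_x ∂_ξ; ∂_θ L_x = q L_x ∂_θ; ∂_z L_x = L_x ∂_z; ∂_x L_ξ = q⁻¹ L_ξ ∂_x; ∂_ξ L_ξ = Id − L_ξ ∂_ξ; ∂_θ L_ξ = L_ξ ∂_θ; ∂_z L_ξ = −q⁻¹ L_ξ ∂_z; ∂_x L_θ = q⁻¹ L_θ ∂_x; ∂_ξ L_θ = L_θ ∂_ξ; ∂_θ L_θ = Id − L_θ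 ∂_θ; ∂_z L_θ = −q⁻¹ L_θ ∂_z; ∂_x L_z = L_z ∂_x; ∂_ξ L_z = −q L_z ∂_ξ; ∂_θ L_z = −q L_z ∂_θ; ∂_z L_z = Id + L_z ∂_z. -/
/-!
STATEMENT 16: Let `∂_x, ∂_ξ, ∂_θ, ∂_z` be the `ℂ`-linear endomorphisms of `A_q` defined on
the PBW basis `x^m ξ^α θ^β z^n` by
`∂_x(x^m ξ^α θ^β z^n) = m x^{m−1} ξ^α θ^β z^n`,
`∂_ξ(x^m ξ^α θ^β z^n) = α q^m x^m θ^β z^n`,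
`∂_θ(x^m ξ^α θ^β z^n) = β q^m x^m ξ^α z^n`,
`∂_z(x^m ξ^α θ^β z^n) = n (−q⁻¹)^{α+β} x^m ξ^α θ^β z^{n−1}`.
Then, as operators on `A_q` (a generator `u` acting by left multiplication `L_u`), the
sixteen stated relations hold.
-/
open scoped TensorProduct

namespace DGQS

/-- The standard scalar product `⟨(a,b),(a',b')⟩ = aa' + bb'` on `ℤ₂ × ℤ₂`. -/
def pair2 (γ δ : ZMod 2 × ZMod 2) : ZMod 2 := γ.1 * δ.1 + γ.2 * δ.2

/-- The sign `(−1)^{⟨γ,δ⟩}`. -/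
noncomputable def gsign (γ δ : ZMod 2 × ZMod 2) : ℂ := (-1 : ℂ) ^ (pair2 γ δ).val

/-- The defining relations of the double-graded quantum superplane, imposed on the free
algebra on four generators `x = ι 0`, `ξ = ι 1`, `θ = ι 2`, `z = ι 3`:
`xξ = q ξx`, `xθ = q θx`, `xz = zx`, `ξ² = 0`, `θ² = 0`, `ξθ = θξ`,
`ξz = −q⁻¹ zξ`, `θz = −q⁻¹ zθ`. -/
inductive Rel (q : ℂ) : FreeAlgebra ℂ (Fin 4) → FreeAlgebra ℂ (Fin 4) → Prop
  | x_xi : Rel q (FreeAlgebra.ι ℂ (0 : Fin 4) * FreeAlgebra.ι ℂ (1 : Fin 4))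
      (q • (FreeAlgebra.ι ℂ (1 : Fin 4) * FreeAlgebra.ι ℂ (0 : Fin 4)))
  | x_th : Rel q (FreeAlgebra.ι ℂ (0 : Fin 4) * FreeAlgebra.ι ℂ (2 : Fin 4))
      (q • (FreeAlgebra.ι ℂ (2 : Fin 4) * FreeAlgebra.ι ℂ (0 : Fin 4)))
  | x_z : Rel q (FreeAlgebra.ι ℂ (0 : Fin 4) * FreeAlgebra.ι ℂ (3 : Fin 4))
      (FreeAlgebra.ι ℂ (3 : Fin 4) * FreeAlgebra.ι ℂ (0 : Fin 4))
  | xi_sq : Rel q (FreeAlgebra.ι ℂ (1 : Fin 4) * FreeAlgebra.ι ℂ (1 : Fin 4)) 0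
  | th_sq : Rel q (FreeAlgebra.ι ℂ (2 : Fin 4) * FreeAlgebra.ι ℂ (2 : Fin 4)) 0
  | xi_th : Rel q (FreeAlgebra.ι ℂ (1 : Fin 4) * FreeAlgebra.ι ℂ (2 : Fin 4))
      (FreeAlgebra.ι ℂ (2 : Fin 4) * FreeAlgebra.ι ℂ (1 : Fin 4))
  | xi_z : Rel q (FreeAlgebra.ι ℂ (1 : Fin 4) * FreeAlgebra.ι ℂ (3 : Fin 4))
      ((-q⁻¹) • (FreeAlgebra.ι ℂ (3 : Fin 4) * FreeAlgebra.ι ℂ (1 : Fin 4)))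
  | th_z : Rel q (FreeAlgebra.ι ℂ (2 : Fin 4) * FreeAlgebra.ι ℂ (3 : Fin 4))
      ((-q⁻¹) • (FreeAlgebra.ι ℂ (3 : Fin 4) * FreeAlgebra.ι ℂ (2 : Fin 4)))

/-- The algebra of polynomials on the double-graded quantum superplane `ℝ_q(1|𝟏)`. -/
abbrev Aq (q : ℂ) : Type := RingQuot (Rel q)

/-- The generators of `A_q`. -/
noncomputable def gen (q : ℂ) (i : Fin 4) : Aq q :=
  RingQuot.mkAlgHom ℂ (Rel q) (FreeAlgebra.ι ℂ i)

/-- The generator `x`, of degree `(0,0)`. -/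
noncomputable def X (q : ℂ) : Aq q := gen q 0
/-- The generator `ξ`, of degree `(0,1)`. -/
noncomputable def Xi (q : ℂ) : Aq q := gen q 1
/-- The generator `θ`, of degree `(1,0)`. -/
noncomputable def Th (q : ℂ) : Aq q := gen q 2
/-- The generator `z`, of degree `(1,1)`. -/
noncomputable def Zg (q : ℂ) : Aq q := gen q 3

/-- The `ℤ₂ × ℤ₂`-degrees of the generators. -/
def dg : Fin 4 → ZMod 2 × ZMod 2 := ![(0, 0), (0, 1), (1, 0), (1, 1)]

/-- The homogeneous component of degree `γ` of `A_q`: the span of the images of the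
words in the generators of total degree `γ`. -/
noncomputable def grading (q : ℂ) (γ : ZMod 2 × ZMod 2) : Submodule ℂ (Aq q) :=
  Submodule.span ℂ
    { a | ∃ w : List (Fin 4), (w.map dg).sum = γ ∧ a = (w.map (gen q)).prod }

end DGQS

namespace DGQSAux
open DGQS

variable {q : ℂ}

lemma x_xi : X q * Xi q = q • (Xi q * X q) := by
  have h := RingQuot.mkAlgHom_rel ℂ (Rel.x_xi (q := q))
  simpa [X, Xi, gen, map_mul, map_smul] using h

lemma x_th : X q * Th q = q • (Th q * X q) := by
  have h := RingQuot.mkAlgHom_rel ℂ (Rel.x_th (q := q))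
  simpa [X, Th, gen, map_mul, map_smul] using h

lemma x_z : X q * Zg q = Zg q * X q := by
  have h := RingQuot.mkAlgHom_rel ℂ (Rel.x_z (q := q))
  simpa [X, Zg, gen, map_mul] using h

lemma xi_sq : Xi q * Xi q = 0 := by
  have h := RingQuot.mkAlgHom_rel ℂ (Rel.xi_sq (q := q))
  simpa [Xi, gen, map_mul] using h

lemma th_sq : Th q * Th q = 0 := by
  have h := RingQuot.mkAlgHom_rel ℂ (Rel.th_sq (q := q))
  simpa [Th, gen, map_mul] using h

lemma xi_th : Xi q * Th q = Th q * Xi q := by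
  have h := RingQuot.mkAlgHom_rel ℂ (Rel.xi_th (q := q))
  simpa [Xi, Th, gen, map_mul] using h

lemma xi_z : Xi q * Zg q = -(q⁻¹ • (Zg q * Xi q)) := by
  have h := RingQuot.mkAlgHom_rel ℂ (Rel.xi_z (q := q))
  simpa [Xi, Zg, gen, map_mul, map_smul] using h

lemma th_z : Th q * Zg q = -(q⁻¹ • (Zg q * Th q)) := by
  have h := RingQuot.mkAlgHom_rel ℂ (Rel.th_z (q := q))
  simpa [Th, Zg, gen, map_mul, map_smul] using h

lemma xi_x (hq : q ≠ 0) : Xi q * X q = q⁻¹ • (X q * Xi q) := by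
  rw [x_xi, smul_smul, inv_mul_cancel₀ hq, one_smul]

lemma th_x (hq : q ≠ 0) : Th q * X q = q⁻¹ • (X q * Th q) := by
  rw [x_th, smul_smul, inv_mul_cancel₀ hq, one_smul]

lemma z_x : Zg q * X q = X q * Zg q := x_z.symm

lemma z_xi (hq : q ≠ 0) : Zg q * Xi q = (-q) • (Xi q * Zg q) := by
  rw [xi_z]
  rw [smul_neg, smul_smul]
  have : -q * q⁻¹ = -1 := by field_simp
  rw [this, neg_one_smul, neg_neg]

lemma z_th (hq : q ≠ 0) : Zg q * Th q = (-q) • (Th q * Zg q) := by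
  rw [th_z]
  rw [smul_neg, smul_smul]
  have : -q * q⁻¹ = -1 := by field_simp
  rw [this, neg_one_smul, neg_neg]

lemma xi_powx (hq : q ≠ 0) (m : ℕ) :
    Xi q * X q ^ m = (q⁻¹) ^ m • (X q ^ m * Xi q) := by
  induction m with
  | zero => simp
  | succ m ih =>
    rw [pow_succ, ← mul_assoc, ih, smul_mul_assoc, mul_assoc, xi_x hq, mul_smul_comm,
      smul_smul, ← pow_succ, ← mul_assoc, ← pow_succ]

lemma th_powx (hq : q ≠ 0) (m : ℕ) :
    Th q * X q ^ m = (q⁻¹) ^ m • (X q ^ m * Th q) := by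
  induction m with
  | zero => simp
  | succ m ih =>
    rw [pow_succ, ← mul_assoc, ih, smul_mul_assoc, mul_assoc, th_x hq, mul_smul_comm,
      smul_smul, ← pow_succ, ← mul_assoc, ← pow_succ]

lemma z_powx (m : ℕ) : Zg q * X q ^ m = X q ^ m * Zg q := by
  induction m with
  | zero => simp
  | succ m ih => rw [pow_succ, ← mul_assoc, ih, mul_assoc, z_x, ← mul_assoc]

-- tail-carrying versions
lemma xi_powx' (hq : q ≠ 0) (m : ℕ) (t : Aq q) :
    Xi q * (X q ^ m * t) = (q⁻¹) ^ m • (X q ^ m * (Xi q * t)) := by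
  rw [← mul_assoc, xi_powx hq, smul_mul_assoc, mul_assoc]

lemma th_powx' (hq : q ≠ 0) (m : ℕ) (t : Aq q) :
    Th q * (X q ^ m * t) = (q⁻¹) ^ m • (X q ^ m * (Th q * t)) := by
  rw [← mul_assoc, th_powx hq, smul_mul_assoc, mul_assoc]

lemma z_powx' (m : ℕ) (t : Aq q) :
    Zg q * (X q ^ m * t) = X q ^ m * (Zg q * t) := by
  rw [← mul_assoc, z_powx, mul_assoc]

lemma xi_sq' (t : Aq q) : Xi q * (Xi q * t) = 0 := by
  rw [← mul_assoc, xi_sq, zero_mul]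

lemma th_sq' (t : Aq q) : Th q * (Th q * t) = 0 := by
  rw [← mul_assoc, th_sq, zero_mul]

lemma th_xi' (t : Aq q) : Th q * (Xi q * t) = Xi q * (Th q * t) := by
  rw [← mul_assoc, ← xi_th, mul_assoc]

lemma z_xi' (hq : q ≠ 0) (t : Aq q) :
    Zg q * (Xi q * t) = (-q) • (Xi q * (Zg q * t)) := by
  rw [← mul_assoc, z_xi hq, smul_mul_assoc, mul_assoc]

lemma z_th' (hq : q ≠ 0) (t : Aq q) :
    Zg q * (Th q * t) = (-q) • (Th q * (Zg q * t)) := by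
  rw [← mul_assoc, z_th hq, smul_mul_assoc, mul_assoc]

/-- The PBW monomial `x^m ξ^α θ^β z^n`. -/
noncomputable def mono (q : ℂ) (m : ℕ) (α β : Bool) (n : ℕ) : Aq q :=
  X q ^ m * Xi q ^ α.toNat * Th q ^ β.toNat * Zg q ^ n

/-- Left multiplication by `x`. -/
lemma LX (m : ℕ) (α β : Bool) (n : ℕ) :
    X q * mono q m α β n = mono q (m + 1) α β n := by
  simp only [mono, ← mul_assoc, ← pow_succ']

/-- Left multiplication by `ξ` kills a `ξ`. -/
lemma LXi_true (hq : q ≠ 0) (m : ℕ) (β : Bool) (n : ℕ) :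
    Xi q * mono q m true β n = 0 := by
  simp only [mono, Bool.toNat_true, pow_one, mul_assoc]
  rw [xi_powx' hq, xi_sq', mul_zero, smul_zero]

lemma LXi_false (hq : q ≠ 0) (m : ℕ) (β : Bool) (n : ℕ) :
    Xi q * mono q m false β n = (q⁻¹) ^ m • mono q m true β n := by
  simp only [mono, Bool.toNat_false, Bool.toNat_true, pow_zero, pow_one, mul_one, one_mul,
    mul_assoc]
  rw [xi_powx' hq]

/-- Left multiplication by `θ`. -/
lemma LTh_true (hq : q ≠ 0) (m : ℕ) (α : Bool) (n : ℕ) :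
    Th q * mono q m α true n = 0 := by
  cases α <;>
    simp only [mono, Bool.toNat_true, Bool.toNat_false, pow_zero, pow_one, mul_one, one_mul,
      mul_assoc] <;>
    rw [th_powx' hq] <;>
    first
      | rw [th_sq', mul_zero, smul_zero]
      | rw [th_xi', th_sq', mul_zero, mul_zero, smul_zero]

lemma LTh_false (hq : q ≠ 0) (m : ℕ) (α : Bool) (n : ℕ) :
    Th q * mono q m α false n = (q⁻¹) ^ m • mono q m α true n := by
  cases α <;>
    simp only [mono, Bool.toNat_true, Bool.toNat_false, pow_zero, pow_one, mul_one, one_mul,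
      mul_assoc] <;>
    rw [th_powx' hq]
  rw [th_xi']

/-- Left multiplication by `z`. -/
lemma LZ (hq : q ≠ 0) (m : ℕ) (α β : Bool) (n : ℕ) :
    Zg q * mono q m α β n = ((-q) ^ (α.toNat + β.toNat)) • mono q m α β (n + 1) := by
  cases α <;> cases β <;>
    simp only [mono, Bool.toNat_true, Bool.toNat_false, pow_zero, pow_one, mul_one, one_mul,
      Nat.add_zero, Nat.zero_add, mul_assoc, pow_succ' (Zg q) n] <;>
    rw [z_powx'] <;>
    try simp only [z_xi' hq, z_th' hq, mul_smul_comm, smul_smul]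
  all_goals match_scalars <;> ring

/-- The set of PBW monomials. -/
def pbw (q : ℂ) : Set (Aq q) := {a | ∃ m n : ℕ, ∃ α β : Bool, a = mono q m α β n}

/-- The span of the PBW monomials. -/
noncomputable def S (q : ℂ) : Submodule ℂ (Aq q) := Submodule.span ℂ (pbw q)

lemma mono_mem (m n : ℕ) (α β : Bool) : mono q m α β n ∈ S q :=
  Submodule.subset_span ⟨m, n, α, β, rfl⟩

lemma mul_mem_S (g : Aq q) (hg : ∀ m n α β, g * mono q m α β n ∈ S q) :
    ∀ a ∈ S q, g * a ∈ S q := by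
  intro a ha
  induction ha using Submodule.span_induction with
  | mem x hx => obtain ⟨m, n, α, β, rfl⟩ := hx; exact hg m n α β
  | zero => rw [mul_zero]; exact zero_mem _
  | add x y _ _ hx hy => rw [mul_add]; exact add_mem hx hy
  | smul c x _ hx => rw [mul_smul_comm]; exact Submodule.smul_mem _ _ hx

lemma X_mul_mem (a : Aq q) (ha : a ∈ S q) : X q * a ∈ S q :=
  mul_mem_S _ (fun m n α β => by rw [LX]; exact mono_mem _ _ _ _) a ha

lemma Xi_mul_mem (hq : q ≠ 0) (a : Aq q) (ha : a ∈ S q) : Xi q * a ∈ S q := by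
  refine mul_mem_S _ (fun m n α β => ?_) a ha
  cases α
  · rw [LXi_false hq]; exact Submodule.smul_mem _ _ (mono_mem _ _ _ _)
  · rw [LXi_true hq]; exact zero_mem _

lemma Th_mul_mem (hq : q ≠ 0) (a : Aq q) (ha : a ∈ S q) : Th q * a ∈ S q := by
  refine mul_mem_S _ (fun m n α β => ?_) a ha
  cases β
  · rw [LTh_false hq]; exact Submodule.smul_mem _ _ (mono_mem _ _ _ _)
  · rw [LTh_true hq]; exact zero_mem _

lemma Z_mul_mem (hq : q ≠ 0) (a : Aq q) (ha : a ∈ S q) : Zg q * a ∈ S q := by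
  refine mul_mem_S _ (fun m n α β => ?_) a ha
  rw [LZ hq]; exact Submodule.smul_mem _ _ (mono_mem _ _ _ _)

/-- Elements whose left multiplication preserves `S`. -/
noncomputable def stab (q : ℂ) : Subalgebra ℂ (Aq q) where
  carrier := {a | ∀ b ∈ S q, a * b ∈ S q}
  mul_mem' := fun ha hb c hc => by rw [mul_assoc]; exact ha _ (hb _ hc)
  add_mem' := fun ha hb c hc => by rw [add_mul]; exact add_mem (ha _ hc) (hb _ hc)
  one_mem' := fun b hb => by rwa [one_mul]
  algebraMap_mem' := fun r b hb => by
    rw [Algebra.algebraMap_eq_smul_one, smul_mul_assoc, one_mul]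
    exact Submodule.smul_mem _ _ hb

lemma adjoin_gen_top : Algebra.adjoin ℂ (Set.range (gen q)) = ⊤ := by
  have h1 : Set.range (gen q)
      = (RingQuot.mkAlgHom ℂ (Rel q)) '' Set.range (FreeAlgebra.ι ℂ) := by
    rw [← Set.range_comp]; rfl
  rw [h1, ← AlgHom.map_adjoin, FreeAlgebra.adjoin_range_ι, Algebra.map_top,
    AlgHom.range_eq_top]
  exact RingQuot.mkAlgHom_surjective ℂ (Rel q)

lemma mem_stab (hq : q ≠ 0) (a : Aq q) : a ∈ stab q := by
  have h2 : Algebra.adjoin ℂ (Set.range (gen q)) ≤ stab q := by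
    refine Algebra.adjoin_le ?_
    rintro _ ⟨i, rfl⟩
    fin_cases i
    · exact fun b hb => X_mul_mem b hb
    · exact fun b hb => Xi_mul_mem hq b hb
    · exact fun b hb => Th_mul_mem hq b hb
    · exact fun b hb => Z_mul_mem hq b hb
  exact h2 (by rw [adjoin_gen_top]; trivial)

lemma one_mem_S : (1 : Aq q) ∈ S q := by
  simpa [mono] using mono_mem (q := q) 0 0 false false

lemma S_top (hq : q ≠ 0) : Submodule.span ℂ (pbw q) = ⊤ := by
  rw [eq_top_iff]
  intro a _
  simpa [S] using mem_stab hq a 1 one_mem_S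

end DGQSAux


open DGQSAux

set_option maxHeartbeats 2000000 in
open DGQS in
theorem statement16 (q : ℂ) (hq : q ≠ 0) (hqroot : ∀ n : ℕ, 0 < n → q ^ n ≠ 1)
    (Dx Dξ Dθ Dz : Aq q →ₗ[ℂ] Aq q)
    (hDx : ∀ (m n : ℕ) (α β : Bool),
      Dx (X q ^ m * Xi q ^ α.toNat * Th q ^ β.toNat * Zg q ^ n)
        = (m : ℂ) • (X q ^ (m - 1) * Xi q ^ α.toNat * Th q ^ β.toNat * Zg q ^ n))
    (hDξ : ∀ (m n : ℕ) (α β : Bool),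
      Dξ (X q ^ m * Xi q ^ α.toNat * Th q ^ β.toNat * Zg q ^ n)
        = ((α.toNat : ℂ) * q ^ m) • (X q ^ m * Th q ^ β.toNat * Zg q ^ n))
    (hDθ : ∀ (m n : ℕ) (α β : Bool),
      Dθ (X q ^ m * Xi q ^ α.toNat * Th q ^ β.toNat * Zg q ^ n)
        = ((β.toNat : ℂ) * q ^ m) • (X q ^ m * Xi q ^ α.toNat * Zg q ^ n))
    (hDz : ∀ (m n : ℕ) (α β : Bool),
      Dz (X q ^ m * Xi q ^ α.toNat * Th q ^ β.toNat * Zg q ^ n)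
        = ((n : ℂ) * (-q⁻¹) ^ (α.toNat + β.toNat)) •
            (X q ^ m * Xi q ^ α.toNat * Th q ^ β.toNat * Zg q ^ (n - 1))) :
    -- commutation with `L_x`
    Dx ∘ₗ LinearMap.mulLeft ℂ (X q) = LinearMap.id + LinearMap.mulLeft ℂ (X q) ∘ₗ Dx ∧
    Dξ ∘ₗ LinearMap.mulLeft ℂ (X q) = q • (LinearMap.mulLeft ℂ (X q) ∘ₗ Dξ) ∧
    Dθ ∘ₗ LinearMap.mulLeft ℂ (X q) = q • (LinearMap.mulLeft ℂ (X q) ∘ₗ Dθ) ∧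
    Dz ∘ₗ LinearMap.mulLeft ℂ (X q) = LinearMap.mulLeft ℂ (X q) ∘ₗ Dz ∧
    -- commutation with `L_ξ`
    Dx ∘ₗ LinearMap.mulLeft ℂ (Xi q) = q⁻¹ • (LinearMap.mulLeft ℂ (Xi q) ∘ₗ Dx) ∧
    Dξ ∘ₗ LinearMap.mulLeft ℂ (Xi q) = LinearMap.id - LinearMap.mulLeft ℂ (Xi q) ∘ₗ Dξ ∧
    Dθ ∘ₗ LinearMap.mulLeft ℂ (Xi q) = LinearMap.mulLeft ℂ (Xi q) ∘ₗ Dθ ∧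
    Dz ∘ₗ LinearMap.mulLeft ℂ (Xi q) = (-q⁻¹) • (LinearMap.mulLeft ℂ (Xi q) ∘ₗ Dz) ∧
    -- commutation with `L_θ`
    Dx ∘ₗ LinearMap.mulLeft ℂ (Th q) = q⁻¹ • (LinearMap.mulLeft ℂ (Th q) ∘ₗ Dx) ∧
    Dξ ∘ₗ LinearMap.mulLeft ℂ (Th q) = LinearMap.mulLeft ℂ (Th q) ∘ₗ Dξ ∧
    Dθ ∘ₗ LinearMap.mulLeft ℂ (Th q) = LinearMap.id - LinearMap.mulLeft ℂ (Th q) ∘ₗ Dθ ∧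
    Dz ∘ₗ LinearMap.mulLeft ℂ (Th q) = (-q⁻¹) • (LinearMap.mulLeft ℂ (Th q) ∘ₗ Dz) ∧
    -- commutation with `L_z`
    Dx ∘ₗ LinearMap.mulLeft ℂ (Zg q) = LinearMap.mulLeft ℂ (Zg q) ∘ₗ Dx ∧
    Dξ ∘ₗ LinearMap.mulLeft ℂ (Zg q) = (-q) • (LinearMap.mulLeft ℂ (Zg q) ∘ₗ Dξ) ∧
    Dθ ∘ₗ LinearMap.mulLeft ℂ (Zg q) = (-q) • (LinearMap.mulLeft ℂ (Zg q) ∘ₗ Dθ) ∧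
    Dz ∘ₗ LinearMap.mulLeft ℂ (Zg q) = LinearMap.id + LinearMap.mulLeft ℂ (Zg q) ∘ₗ Dz := by
  classical
  have hDx' : ∀ (m n : ℕ) (α β : Bool),
      Dx (mono q m α β n) = (m : ℂ) • mono q (m - 1) α β n := fun m n α β => hDx m n α β
  have mono_noxi : ∀ (m n : ℕ) (β : Bool),
      X q ^ m * Th q ^ β.toNat * Zg q ^ n = mono q m false β n := by
    intro m n β; simp [mono]
  have mono_noth : ∀ (m n : ℕ) (α : Bool),
      X q ^ m * Xi q ^ α.toNat * Zg q ^ n = mono q m α false n := by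
    intro m n α; simp [mono]
  have hDξ' : ∀ (m n : ℕ) (α β : Bool),
      Dξ (mono q m α β n) = ((α.toNat : ℂ) * q ^ m) • mono q m false β n := fun m n α β => by
    rw [← mono_noxi]; exact hDξ m n α β
  have hDθ' : ∀ (m n : ℕ) (α β : Bool),
      Dθ (mono q m α β n) = ((β.toNat : ℂ) * q ^ m) • mono q m α false n := fun m n α β => by
    rw [← mono_noth]; exact hDθ m n α β
  have hDz' : ∀ (m n : ℕ) (α β : Bool),
      Dz (mono q m α β n) = ((n : ℂ) * (-q⁻¹) ^ (α.toNat + β.toNat)) • mono q m α β (n - 1) :=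
    fun m n α β => hDz m n α β
  refine ⟨?_, ?_, ?_, ?_, ?_, ?_, ?_, ?_, ?_, ?_, ?_, ?_, ?_, ?_, ?_, ?_⟩ <;>
  · apply LinearMap.ext_on (S_top hq)
    rintro a ⟨m, n, α, β, rfl⟩
    cases α <;> cases β <;>
      simp only [LinearMap.comp_apply, LinearMap.mulLeft_apply, LinearMap.add_apply,
        LinearMap.sub_apply, LinearMap.smul_apply, LinearMap.id_apply] <;>
      (try cases m) <;> (try cases n) <;>
      simp only [LX, LXi_true hq, LXi_false hq, LTh_true hq, LTh_false hq, LZ hq,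
        hDx', hDξ', hDθ', hDz', map_smul, map_zero, mul_smul_comm, smul_smul, mul_zero,
        smul_zero, zero_smul, zero_mul, mul_one, one_mul, Nat.add_sub_cancel,
        Nat.succ_sub_one, Nat.cast_zero, Nat.cast_one, Nat.cast_add, Nat.cast_succ,
        Bool.toNat_false, Bool.toNat_true, pow_zero, pow_one, Nat.zero_add, Nat.add_zero,
        add_zero, zero_add, Nat.zero_sub, Nat.sub_zero] <;>
      (try simp) <;>
      match_scalars <;>
      field_simp <;>
      (first | ring1 | tauto | (left; ring1))
end

section
/- The partial derivative operators on the double-graded quantum superplane satisfy the commutation rules, as ℂ-linear endomorphisms of A_q: ∂_x ∂_ξ = q ∂_ξ ∂_x; ∂_x ∂_θ = q ∂_θ ∂_x; ∂_x ∂_z = ∂_z ∂_x; ∂_ξ ∂_θ = ∂_θ ∂_ξ; ∂_ξ ∂_z = −q⁻¹ ∂_z ∂_ξ; ∂_θ ∂_z = −q⁻¹ ∂_z ∂_θ; ∂_ξ ∂_ξ = 0; ∂_θ ∂_θ = 0. -/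
/-!
STATEMENT 17: The partial derivative operators on the double-graded quantum superplane
(defined on the PBW basis `x^m ξ^α θ^β z^n` by
`∂_x(x^m ξ^α θ^β z^n) = m x^{m−1} ξ^α θ^β z^n`,
`∂_ξ(x^m ξ^α θ^β z^n) = α q^m x^m θ^β z^n`,
`∂_θ(x^m ξ^α θ^β z^n) = β q^m x^m ξ^α z^n`,
`∂_z(x^m ξ^α θ^β z^n) = n (−q⁻¹)^{α+β} x^m ξ^α θ^β z^{n−1}`)
satisfy, as `ℂ`-linear endomorphisms of `A_q`:
`∂_x ∂_ξ = q ∂_ξ ∂_x`; `∂_x ∂_θ = q ∂_θ ∂_x`; `∂_x ∂_z = ∂_z ∂_x`; `∂_ξ ∂_θ = ∂_θ ∂_ξ`;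
`∂_ξ ∂_z = −q⁻¹ ∂_z ∂_ξ`; `∂_θ ∂_z = −q⁻¹ ∂_z ∂_θ`; `∂_ξ ∂_ξ = 0`; `∂_θ ∂_θ = 0`.
-/
open scoped TensorProduct

namespace DGQS17
open DGQS

variable {q : ℂ}

lemma rel_eq {a b : FreeAlgebra ℂ (Fin 4)} (h : Rel q a b) :
    RingQuot.mkAlgHom ℂ (Rel q) a = RingQuot.mkAlgHom ℂ (Rel q) b :=
  RingQuot.mkAlgHom_rel ℂ h

lemma x_xi : X q * Xi q = q • (Xi q * X q) := by
  simpa [X, Xi, gen, map_mul, map_smul] using rel_eq (Rel.x_xi (q := q))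

lemma x_th : X q * Th q = q • (Th q * X q) := by
  simpa [X, Th, gen, map_mul, map_smul] using rel_eq (Rel.x_th (q := q))

lemma x_z : X q * Zg q = Zg q * X q := by
  simpa [X, Zg, gen, map_mul] using rel_eq (Rel.x_z (q := q))

lemma xi_sq : Xi q * Xi q = 0 := by
  simpa [Xi, gen, map_mul] using rel_eq (Rel.xi_sq (q := q))

lemma th_sq : Th q * Th q = 0 := by
  simpa [Th, gen, map_mul] using rel_eq (Rel.th_sq (q := q))

lemma xi_th : Xi q * Th q = Th q * Xi q := by
  simpa [Xi, Th, gen, map_mul] using rel_eq (Rel.xi_th (q := q))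

lemma xi_z : Xi q * Zg q = -(q⁻¹ • (Zg q * Xi q)) := by
  simpa [Xi, Zg, gen, map_mul, map_smul, neg_smul] using rel_eq (Rel.xi_z (q := q))

lemma th_z : Th q * Zg q = -(q⁻¹ • (Zg q * Th q)) := by
  simpa [Th, Zg, gen, map_mul, map_smul, neg_smul] using rel_eq (Rel.th_z (q := q))


-- triple-form rewrite rules
lemma xi_x' (hq : q ≠ 0) (c : Aq q) : Xi q * (X q * c) = q⁻¹ • (X q * (Xi q * c)) := by
  have h : Xi q * X q = q⁻¹ • (X q * Xi q) := by
    rw [x_xi, smul_smul, inv_mul_cancel₀ hq, one_smul]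
  rw [← mul_assoc, h, smul_mul_assoc, mul_assoc]

lemma th_x' (hq : q ≠ 0) (c : Aq q) : Th q * (X q * c) = q⁻¹ • (X q * (Th q * c)) := by
  have h : Th q * X q = q⁻¹ • (X q * Th q) := by
    rw [x_th, smul_smul, inv_mul_cancel₀ hq, one_smul]
  rw [← mul_assoc, h, smul_mul_assoc, mul_assoc]

lemma zg_x' (c : Aq q) : Zg q * (X q * c) = X q * (Zg q * c) := by
  rw [← mul_assoc, ← x_z, mul_assoc]

lemma th_xi' (c : Aq q) : Th q * (Xi q * c) = Xi q * (Th q * c) := by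
  rw [← mul_assoc, ← xi_th, mul_assoc]

lemma zg_xi' (hq : q ≠ 0) (c : Aq q) : Zg q * (Xi q * c) = (-q) • (Xi q * (Zg q * c)) := by
  have h : Zg q * Xi q = (-q) • (Xi q * Zg q) := by
    rw [xi_z, smul_neg, smul_smul]
    simp [mul_inv_cancel₀ hq]
  rw [← mul_assoc, h, smul_mul_assoc, mul_assoc]

lemma zg_th' (hq : q ≠ 0) (c : Aq q) : Zg q * (Th q * c) = (-q) • (Th q * (Zg q * c)) := by
  have h : Zg q * Th q = (-q) • (Th q * Zg q) := by
    rw [th_z, smul_neg, smul_smul]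
    simp [mul_inv_cancel₀ hq]
  rw [← mul_assoc, h, smul_mul_assoc, mul_assoc]

lemma xi_xi' (c : Aq q) : Xi q * (Xi q * c) = 0 := by
  rw [← mul_assoc, xi_sq, zero_mul]

lemma th_th' (c : Aq q) : Th q * (Th q * c) = 0 := by
  rw [← mul_assoc, th_sq, zero_mul]

-- power commutation rules (for right multiplication: z^n moves past a generator)
lemma zn_x (n : ℕ) : Zg q ^ n * X q = X q * Zg q ^ n := by
  induction n with
  | zero => simp
  | succ k ih => rw [pow_succ, mul_assoc, ← x_z, ← mul_assoc, ih, mul_assoc]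

lemma zn_xi (hq : q ≠ 0) (n : ℕ) : Zg q ^ n * Xi q = (-q) ^ n • (Xi q * Zg q ^ n) := by
  induction n with
  | zero => simp
  | succ k ih =>
    have h : Zg q * Xi q = (-q) • (Xi q * Zg q) := by
      rw [xi_z, smul_neg, smul_smul]
      simp [mul_inv_cancel₀ hq]
    rw [pow_succ, mul_assoc, h, mul_smul_comm, ← mul_assoc, ih, smul_mul_assoc, smul_smul,
      mul_assoc, ← pow_succ', ← pow_succ]

lemma zn_th (hq : q ≠ 0) (n : ℕ) : Zg q ^ n * Th q = (-q) ^ n • (Th q * Zg q ^ n) := by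
  induction n with
  | zero => simp
  | succ k ih =>
    have h : Zg q * Th q = (-q) • (Th q * Zg q) := by
      rw [th_z, smul_neg, smul_smul]
      simp [mul_inv_cancel₀ hq]
    rw [pow_succ, mul_assoc, h, mul_smul_comm, ← mul_assoc, ih, smul_mul_assoc, smul_smul,
      mul_assoc, ← pow_succ', ← pow_succ]

lemma xm_x' (m : ℕ) (c : Aq q) : X q ^ m * (X q * c) = X q ^ (m + 1) * c := by
  rw [← mul_assoc, ← pow_succ]


def MonoSet (q : ℂ) : Set (Aq q) :=
  {a | ∃ (m n : ℕ) (α β : Bool),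
    a = X q ^ m * Xi q ^ α.toNat * Th q ^ β.toNat * Zg q ^ n}

lemma mono_mul_gen (hq : q ≠ 0) (i : Fin 4) {a : Aq q} (ha : a ∈ MonoSet q) :
    a * gen q i ∈ Submodule.span ℂ (MonoSet q) := by
  obtain ⟨m, n, α, β, rfl⟩ := ha
  fin_cases i
  · -- X
    show _ * X q ∈ _
    rcases α <;> rcases β <;>
      simp only [Bool.toNat_true, Bool.toNat_false, pow_zero, pow_one, mul_one, one_mul,
        mul_assoc, zn_x, th_x' hq, xi_x' hq, xm_x' , mul_smul_comm, smul_smul]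
    · exact Submodule.subset_span ⟨m + 1, n, false, false, by simp [mul_assoc]⟩
    · exact Submodule.smul_mem _ _
        (Submodule.subset_span ⟨m + 1, n, false, true, by simp [mul_assoc]⟩)
    · exact Submodule.smul_mem _ _
        (Submodule.subset_span ⟨m + 1, n, true, false, by simp [mul_assoc]⟩)
    · exact Submodule.smul_mem _ _
        (Submodule.subset_span ⟨m + 1, n, true, true, by simp [mul_assoc]⟩)
  · -- Xi
    show _ * Xi q ∈ _
    rcases α <;> rcases β <;>
      simp only [Bool.toNat_true, Bool.toNat_false, pow_zero, pow_one, mul_one, one_mul,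
        mul_assoc, zn_xi hq, th_xi', xi_xi', mul_smul_comm, smul_smul, mul_zero, smul_zero]
    · exact Submodule.smul_mem _ _
        (Submodule.subset_span ⟨m, n, true, false, by simp [mul_assoc]⟩)
    · exact Submodule.smul_mem _ _
        (Submodule.subset_span ⟨m, n, true, true, by simp [mul_assoc]⟩)
    · exact Submodule.zero_mem _
    · exact Submodule.zero_mem _
  · -- Th
    show _ * Th q ∈ _
    rcases α <;> rcases β <;>
      simp only [Bool.toNat_true, Bool.toNat_false, pow_zero, pow_one, mul_one, one_mul,
        mul_assoc, zn_th hq, th_th', mul_smul_comm, smul_smul, mul_zero, smul_zero]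
    · exact Submodule.smul_mem _ _
        (Submodule.subset_span ⟨m, n, false, true, by simp [mul_assoc]⟩)
    · exact Submodule.zero_mem _
    · exact Submodule.smul_mem _ _
        (Submodule.subset_span ⟨m, n, true, true, by simp [mul_assoc]⟩)
    · exact Submodule.zero_mem _
  · -- Zg
    show _ * Zg q ∈ _
    rcases α <;> rcases β <;>
      simp only [Bool.toNat_true, Bool.toNat_false, pow_zero, pow_one, mul_one, one_mul,
        mul_assoc, ← pow_succ]
    · exact Submodule.subset_span ⟨m, n + 1, false, false, by simp [mul_assoc]⟩
    · exact Submodule.subset_span ⟨m, n + 1, false, true, by simp [mul_assoc]⟩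
    · exact Submodule.subset_span ⟨m, n + 1, true, false, by simp [mul_assoc]⟩
    · exact Submodule.subset_span ⟨m, n + 1, true, true, by simp [mul_assoc]⟩

lemma span_mono_top (hq : q ≠ 0) : Submodule.span ℂ (MonoSet q) = ⊤ := by
  rw [eq_top_iff]
  rintro a -
  obtain ⟨b, rfl⟩ := RingQuot.mkAlgHom_surjective ℂ (Rel q) a
  have key : ∀ b : FreeAlgebra ℂ (Fin 4), ∀ s ∈ Submodule.span ℂ (MonoSet q),
      s * RingQuot.mkAlgHom ℂ (Rel q) b ∈ Submodule.span ℂ (MonoSet q) := by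
    intro b
    induction b using FreeAlgebra.induction with
    | grade0 r =>
      intro s hs
      rw [AlgHom.commutes, ← Algebra.commutes, ← Algebra.smul_def]
      exact Submodule.smul_mem _ _ hs
    | grade1 i =>
      intro s hs
      have hle : Submodule.span ℂ (MonoSet q) ≤
          (Submodule.span ℂ (MonoSet q)).comap (LinearMap.mulRight ℂ (gen q i)) :=
        Submodule.span_le.2 fun x hx => mono_mul_gen hq i hx
      exact hle hs
    | mul a b ha hb =>
      intro s hs
      rw [map_mul, ← mul_assoc]
      exact hb _ (ha _ hs)
    | add a b ha hb =>
      intro s hs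
      rw [map_add, mul_add]
      exact add_mem (ha _ hs) (hb _ hs)
  have h1 : (1 : Aq q) ∈ Submodule.span ℂ (MonoSet q) :=
    Submodule.subset_span ⟨0, 0, false, false, by simp⟩
  simpa using key b 1 h1

end DGQS17


open DGQS in
theorem statement17 (q : ℂ) (hq : q ≠ 0) (hqroot : ∀ n : ℕ, 0 < n → q ^ n ≠ 1)
    (Dx Dξ Dθ Dz : Aq q →ₗ[ℂ] Aq q)
    (hDx : ∀ (m n : ℕ) (α β : Bool),
      Dx (X q ^ m * Xi q ^ α.toNat * Th q ^ β.toNat * Zg q ^ n)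
        = (m : ℂ) • (X q ^ (m - 1) * Xi q ^ α.toNat * Th q ^ β.toNat * Zg q ^ n))
    (hDξ : ∀ (m n : ℕ) (α β : Bool),
      Dξ (X q ^ m * Xi q ^ α.toNat * Th q ^ β.toNat * Zg q ^ n)
        = ((α.toNat : ℂ) * q ^ m) • (X q ^ m * Th q ^ β.toNat * Zg q ^ n))
    (hDθ : ∀ (m n : ℕ) (α β : Bool),
      Dθ (X q ^ m * Xi q ^ α.toNat * Th q ^ β.toNat * Zg q ^ n)
        = ((β.toNat : ℂ) * q ^ m) • (X q ^ m * Xi q ^ α.toNat * Zg q ^ n))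
    (hDz : ∀ (m n : ℕ) (α β : Bool),
      Dz (X q ^ m * Xi q ^ α.toNat * Th q ^ β.toNat * Zg q ^ n)
        = ((n : ℂ) * (-q⁻¹) ^ (α.toNat + β.toNat)) •
            (X q ^ m * Xi q ^ α.toNat * Th q ^ β.toNat * Zg q ^ (n - 1))) :
    Dx ∘ₗ Dξ = q • (Dξ ∘ₗ Dx) ∧
    Dx ∘ₗ Dθ = q • (Dθ ∘ₗ Dx) ∧
    Dx ∘ₗ Dz = Dz ∘ₗ Dx ∧
    Dξ ∘ₗ Dθ = Dθ ∘ₗ Dξ ∧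
    Dξ ∘ₗ Dz = (-q⁻¹) • (Dz ∘ₗ Dξ) ∧
    Dθ ∘ₗ Dz = (-q⁻¹) • (Dz ∘ₗ Dθ) ∧
    Dξ ∘ₗ Dξ = 0 ∧
    Dθ ∘ₗ Dθ = 0 := by
  classical
  have hspan := DGQS17.span_mono_top (q := q) hq
  -- derived forms of the derivative rules on reduced monomials
  have hDxA : ∀ (m n : ℕ) (β : Bool), Dx (X q ^ m * Th q ^ β.toNat * Zg q ^ n)
      = (m : ℂ) • (X q ^ (m - 1) * Th q ^ β.toNat * Zg q ^ n) := by
    intro m n β; simpa using hDx m n false β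
  have hDxB : ∀ (m n : ℕ) (α : Bool), Dx (X q ^ m * Xi q ^ α.toNat * Zg q ^ n)
      = (m : ℂ) • (X q ^ (m - 1) * Xi q ^ α.toNat * Zg q ^ n) := by
    intro m n α; simpa using hDx m n α false
  have hDξA : ∀ (m n : ℕ) (α : Bool), Dξ (X q ^ m * Xi q ^ α.toNat * Zg q ^ n)
      = ((α.toNat : ℂ) * q ^ m) • (X q ^ m * Zg q ^ n) := by
    intro m n α; simpa using hDξ m n α false
  have hDξB : ∀ (m n : ℕ) (β : Bool), Dξ (X q ^ m * Th q ^ β.toNat * Zg q ^ n) = 0 := by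
    intro m n β; simpa using hDξ m n false β
  have hDθA : ∀ (m n : ℕ) (β : Bool), Dθ (X q ^ m * Th q ^ β.toNat * Zg q ^ n)
      = ((β.toNat : ℂ) * q ^ m) • (X q ^ m * Zg q ^ n) := by
    intro m n β; simpa using hDθ m n false β
  have hDθB : ∀ (m n : ℕ) (α : Bool), Dθ (X q ^ m * Xi q ^ α.toNat * Zg q ^ n) = 0 := by
    intro m n α; simpa using hDθ m n α false
  have hDzA : ∀ (m n : ℕ) (β : Bool), Dz (X q ^ m * Th q ^ β.toNat * Zg q ^ n)
      = ((n : ℂ) * (-q⁻¹) ^ β.toNat) • (X q ^ m * Th q ^ β.toNat * Zg q ^ (n - 1)) := by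
    intro m n β; simpa using hDz m n false β
  have hDzB : ∀ (m n : ℕ) (α : Bool), Dz (X q ^ m * Xi q ^ α.toNat * Zg q ^ n)
      = ((n : ℂ) * (-q⁻¹) ^ α.toNat) • (X q ^ m * Xi q ^ α.toNat * Zg q ^ (n - 1)) := by
    intro m n α; simpa using hDz m n α false
  refine ⟨?_, ?_, ?_, ?_, ?_, ?_, ?_, ?_⟩
  · -- Dx Dξ = q Dξ Dx
    apply LinearMap.ext_on hspan
    rintro a ⟨m, n, α, β, rfl⟩
    simp only [LinearMap.comp_apply, LinearMap.smul_apply, hDξ, hDx, hDxA, map_smul, smul_smul]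
    congr 1
    rcases m with _ | k
    · simp
    · simp only [Nat.add_sub_cancel]
      push_cast
      ring
  · -- Dx Dθ = q Dθ Dx
    apply LinearMap.ext_on hspan
    rintro a ⟨m, n, α, β, rfl⟩
    simp only [LinearMap.comp_apply, LinearMap.smul_apply, hDθ, hDx, hDxB, map_smul, smul_smul]
    congr 1
    rcases m with _ | k
    · simp
    · simp only [Nat.add_sub_cancel]
      push_cast
      ring
  · -- Dx Dz = Dz Dx
    apply LinearMap.ext_on hspan
    rintro a ⟨m, n, α, β, rfl⟩
    simp only [LinearMap.comp_apply, hDz, hDx, map_smul, smul_smul]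
    congr 1
    ring
  · -- Dξ Dθ = Dθ Dξ
    apply LinearMap.ext_on hspan
    rintro a ⟨m, n, α, β, rfl⟩
    simp only [LinearMap.comp_apply, hDθ, hDξ, map_smul, hDξA, hDθA, smul_smul]
    congr 1
    ring
  · -- Dξ Dz = -q⁻¹ Dz Dξ
    apply LinearMap.ext_on hspan
    rintro a ⟨m, n, α, β, rfl⟩
    simp only [LinearMap.comp_apply, LinearMap.smul_apply, hDz, hDξ, hDzA, map_smul, smul_smul]
    congr 1
    rcases α <;> simp <;> ring
  · -- Dθ Dz = -q⁻¹ Dz Dθ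
    apply LinearMap.ext_on hspan
    rintro a ⟨m, n, α, β, rfl⟩
    simp only [LinearMap.comp_apply, LinearMap.smul_apply, hDz, hDθ, hDzB, map_smul, smul_smul]
    congr 1
    rcases β <;> simp <;> ring
  · -- Dξ Dξ = 0
    apply LinearMap.ext_on hspan
    rintro a ⟨m, n, α, β, rfl⟩
    simp [hDξ, hDξB, map_smul]
  · -- Dθ Dθ = 0
    apply LinearMap.ext_on hspan
    rintro a ⟨m, n, α, β, rfl⟩
    simp [hDθ, hDθB, map_smul]
end
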